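/- Let X and Y be independent random vectors in ℝⁿ with absolutely continuous distributions, and let Z be uniformly distributed on the centered Euclidean ball D of volume one, independent of X and Y. Provided all entropies below are well-defined, h(X + Y) ≤ h(X + Z) + h(Y + Z). -/

import Mathlib

open MeasureTheory ProbabilityTheory Real Pointwise
open scoped ENNReal

/-- Differential (Shannon) entropy of a measure on ℝⁿ,
computed from its density w.r.t. Lebesgue measure: `h(μ) = -∫ p log p`. -/
noncomputable def dEnt {n : ℕ} (μ : Measure (EuclideanSpace ℝ (Fin n))) : ℝ :=
  -∫ x, ((μ.rnDeriv volume x).toReal) * Real.log ((μ.rnDeriv volume x).toReal)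

/-- The integrand whose integrability expresses that the entropy of `μ` is
well-defined and finite. -/
noncomputable def entIntegrand {n : ℕ} (μ : Measure (EuclideanSpace ℝ (Fin n))) :
    EuclideanSpace ℝ (Fin n) → ℝ :=
  fun x => ((μ.rnDeriv volume x).toReal) * Real.log ((μ.rnDeriv volume x).toReal)

section Helpers

variable {n : ℕ}

local notation "𝔼" => EuclideanSpace ℝ (Fin n)

lemma conv_eq_withDensity (P Q : Measure 𝔼) [IsFiniteMeasure P] [IsFiniteMeasure Q]
    (hP : P ≪ volume) :
    Measure.map (fun p : 𝔼 × 𝔼 => p.1 + p.2) (P.prod Q)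
      = volume.withDensity (fun s => ∫⁻ t, P.rnDeriv volume (s - t) ∂Q) := by
  have ha : Measurable (P.rnDeriv volume) := Measure.measurable_rnDeriv _ _
  have hap : ∀ A : Set 𝔼, MeasurableSet A →
      P A = ∫⁻ y in A, P.rnDeriv volume y ∂volume := by
    intro A hA
    conv_lhs => rw [← Measure.withDensity_rnDeriv_eq _ _ hP]
    rw [withDensity_apply _ hA]
  ext s hs
  rw [Measure.map_apply measurable_add hs,
    Measure.prod_apply_symm (measurable_add hs), withDensity_apply _ hs]
  have key : ∀ t : 𝔼, P ((fun x => (x, t)) ⁻¹' ((fun p : 𝔼 × 𝔼 => p.1 + p.2) ⁻¹' s))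
      = ∫⁻ y, s.indicator (fun _ => (1:ℝ≥0∞)) y * P.rnDeriv volume (y - t) := by
    intro t
    have h1 : ((fun x => (x, t)) ⁻¹' ((fun p : 𝔼 × 𝔼 => p.1 + p.2) ⁻¹' s))
        = (fun x : 𝔼 => x + t) ⁻¹' s := rfl
    rw [h1, hap _ (hs.preimage (measurable_add_const t)),
      ← lintegral_indicator (hs.preimage (measurable_add_const t))]
    have h2 := lintegral_add_right_eq_self
      (μ := (volume : Measure 𝔼))
      (fun y => s.indicator (fun _ => (1:ℝ≥0∞)) y * P.rnDeriv volume (y - t)) t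
    rw [← h2]
    congr 1
    ext x
    by_cases hx : x + t ∈ s <;>
      simp [Set.indicator, hx, Set.mem_preimage, add_sub_cancel_right]
  simp_rw [key]
  rw [lintegral_lintegral_swap, ← lintegral_indicator hs]
  · congr 1
    ext y
    rw [lintegral_const_mul' _ _ (by by_cases hy : y ∈ s <;> simp [Set.indicator, hy])]
    by_cases hy : y ∈ s <;> simp [Set.indicator, hy]
  · exact (((measurable_const.indicator hs).comp measurable_snd).mul
      (ha.comp (measurable_snd.sub measurable_fst))).aemeasurable

variable {Ω : Type} [MeasureSpace Ω] [IsProbabilityMeasure (ℙ : Measure Ω)]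

lemma map_add_pair {V W : Ω → 𝔼} (hV : Measurable V) (hW : Measurable W)
    (h : IndepFun V W ℙ) :
    Measure.map (fun ω => V ω + W ω) ℙ
      = Measure.map (fun p : 𝔼 × 𝔼 => p.1 + p.2)
          ((Measure.map V ℙ).prod (Measure.map W ℙ)) := by
  rw [← (indepFun_iff_map_prod_eq_prod_map_map hV.aemeasurable hW.aemeasurable).mp h,
    Measure.map_map measurable_add (hV.prodMk hW)]
  rfl

lemma map_add_eq_withDensity {V W : Ω → 𝔼} (hV : Measurable V) (hW : Measurable W)
    (h : IndepFun V W ℙ) (hac : Measure.map V ℙ ≪ volume) :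
    Measure.map (fun ω => V ω + W ω) ℙ
      = volume.withDensity
          (fun s => ∫⁻ t, (Measure.map V ℙ).rnDeriv volume (s - t) ∂(Measure.map W ℙ)) := by
  haveI : IsProbabilityMeasure (Measure.map V ℙ) :=
    Measure.isProbabilityMeasure_map hV.aemeasurable
  haveI : IsProbabilityMeasure (Measure.map W ℙ) :=
    Measure.isProbabilityMeasure_map hW.aemeasurable
  rw [map_add_pair hV hW h]
  exact conv_eq_withDensity _ _ hac

lemma map_add_ac {V W : Ω → 𝔼} (hV : Measurable V) (hW : Measurable W)
    (h : IndepFun V W ℙ) (hac : Measure.map V ℙ ≪ volume) :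
    Measure.map (fun ω => V ω + W ω) ℙ ≪ volume := by
  rw [map_add_eq_withDensity hV hW h hac]
  exact withDensity_absolutelyContinuous _ _

lemma rnDeriv_map_add {V W : Ω → 𝔼} (hV : Measurable V) (hW : Measurable W)
    (h : IndepFun V W ℙ) (hac : Measure.map V ℙ ≪ volume) :
    (Measure.map (fun ω => V ω + W ω) ℙ).rnDeriv volume
      =ᵐ[volume]
      fun s => ∫⁻ t, (Measure.map V ℙ).rnDeriv volume (s - t) ∂(Measure.map W ℙ) := by
  rw [map_add_eq_withDensity hV hW h hac]
  exact Measure.rnDeriv_withDensity _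
    (Measurable.lintegral_prod_right
      ((Measure.measurable_rnDeriv _ _).comp (measurable_fst.sub measurable_snd)))

lemma ae_pos_finite_rnDeriv {W : Ω → 𝔼} (hW : Measurable W)
    (hac : Measure.map W ℙ ≪ volume) :
    ∀ᵐ ω ∂(ℙ : Measure Ω),
      (Measure.map W ℙ).rnDeriv volume (W ω) ≠ 0
        ∧ (Measure.map W ℙ).rnDeriv volume (W ω) ≠ ∞ := by
  haveI : IsProbabilityMeasure (Measure.map W ℙ) :=
    Measure.isProbabilityMeasure_map hW.aemeasurable
  have hp : Measurable ((Measure.map W ℙ).rnDeriv volume) := Measure.measurable_rnDeriv _ _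
  have hA : (ℙ : Measure Ω) (W ⁻¹' ((Measure.map W ℙ).rnDeriv volume ⁻¹' {0})) = 0 := by
    rw [← Measure.map_apply hW (hp (measurableSet_singleton 0))]
    have key : ∀ (m : Measure 𝔼) (p : 𝔼 → ℝ≥0∞), Measurable p →
        volume.withDensity p = m → m (p ⁻¹' {0}) = 0 := by
      intro m p hp h
      rw [← h, withDensity_apply _ (hp (measurableSet_singleton 0)),
        setLIntegral_congr_fun (hp (measurableSet_singleton 0))
          (fun x hx => hx), lintegral_zero]
    exact key _ _ hp (Measure.withDensity_rnDeriv_eq _ _ hac)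
  have hB : (ℙ : Measure Ω) (W ⁻¹' ((Measure.map W ℙ).rnDeriv volume ⁻¹' {∞})) = 0 := by
    rw [← Measure.map_apply hW (hp (measurableSet_singleton ∞))]
    refine hac ?_
    have h2 := Measure.rnDeriv_lt_top (Measure.map W ℙ) (volume : Measure 𝔼)
    rw [ae_iff] at h2
    refine measure_mono_null (fun x hx => ?_) h2
    simp only [Set.mem_preimage, Set.mem_singleton_iff] at hx
    simp [hx]
  rw [ae_iff]
  refine measure_mono_null (fun ω hω => ?_) (measure_union_null hA hB)
  simp only [Set.mem_setOf_eq, not_and_or, not_not] at hω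
  simpa only [Set.mem_union, Set.mem_preimage, Set.mem_singleton_iff] using hω

lemma log_density_int {W : Ω → 𝔼} (hW : Measurable W) (hac : Measure.map W ℙ ≪ volume)
    (hInt : Integrable (entIntegrand (Measure.map W ℙ)) volume) :
    Integrable (fun ω => Real.log (((Measure.map W ℙ).rnDeriv volume (W ω)).toReal)) ℙ
    ∧ ∫ ω, Real.log (((Measure.map W ℙ).rnDeriv volume (W ω)).toReal) ∂ℙ
        = ∫ x, entIntegrand (Measure.map W ℙ) x ∂volume := by
  have hp : Measurable ((Measure.map W ℙ).rnDeriv volume) := Measure.measurable_rnDeriv _ _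
  have hwd : Integrable (fun x => Real.log (((Measure.map W ℙ).rnDeriv volume x).toReal))
      (volume.withDensity ((Measure.map W ℙ).rnDeriv volume)) := by
    rw [integrable_withDensity_iff hp (Measure.rnDeriv_lt_top _ _)]
    exact hInt.congr (ae_of_all _ fun x => by simp [entIntegrand, mul_comm, smul_eq_mul])
  have h1 : Integrable (fun x => Real.log (((Measure.map W ℙ).rnDeriv volume x).toReal))
      (Measure.map W ℙ) := by
    rwa [Measure.withDensity_rnDeriv_eq _ _ hac] at hwd
  constructor
  · have h2 := (integrable_map_measure h1.aestronglyMeasurable hW.aemeasurable).mp h1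
    exact h2
  · rw [← integral_map hW.aemeasurable h1.aestronglyMeasurable,
      ← integral_rnDeriv_smul hac]
    simp [entIntegrand, smul_eq_mul]

end Helpers
set_option maxHeartbeats 1000000 in
/-- If `X, Y` are independent absolutely continuous random vectors in ℝⁿ and `Z`
is uniform on the centered Euclidean ball of volume one, independent of `X, Y`,
then `h(X+Y) ≤ h(X+Z) + h(Y+Z)` (provided these entropies are well-defined). -/
theorem entropy_sum_le_sum_with_uniform_ball
    {n : ℕ} (hn : 1 ≤ n)
    {Ω : Type} [MeasureSpace Ω] (hP : IsProbabilityMeasure (ℙ : Measure Ω))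
    (X Y Z : Ω → EuclideanSpace ℝ (Fin n))
    (hX : Measurable X) (hY : Measurable Y) (hZ : Measurable Z)
    (hIndep : iIndepFun (m := fun _ : Fin 3 =>
        (inferInstance : MeasurableSpace (EuclideanSpace ℝ (Fin n))))
      ![X, Y, Z] (ℙ : Measure Ω))
    (hXac : Measure.map X (ℙ : Measure Ω) ≪ volume)
    (hYac : Measure.map Y (ℙ : Measure Ω) ≪ volume)
    (r : ℝ) (hr : 0 < r)
    (hD : volume (Metric.ball (0 : EuclideanSpace ℝ (Fin n)) r) = 1)
    (hZunif : Measure.map Z (ℙ : Measure Ω)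
      = volume.restrict (Metric.ball (0 : EuclideanSpace ℝ (Fin n)) r))
    (hXY : Integrable
      (entIntegrand (Measure.map (fun ω => X ω + Y ω) (ℙ : Measure Ω))) volume)
    (hXZ : Integrable
      (entIntegrand (Measure.map (fun ω => X ω + Z ω) (ℙ : Measure Ω))) volume)
    (hYZ : Integrable
      (entIntegrand (Measure.map (fun ω => Y ω + Z ω) (ℙ : Measure Ω))) volume) :
    dEnt (Measure.map (fun ω => X ω + Y ω) (ℙ : Measure Ω))
    ≤ dEnt (Measure.map (fun ω => X ω + Z ω) (ℙ : Measure Ω))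
      + dEnt (Measure.map (fun ω => Y ω + Z ω) (ℙ : Measure Ω)) := by
  haveI := hP
  have hmeas : ∀ i, Measurable (![X, Y, Z] i) := by
    intro i; fin_cases i <;> assumption
  -- independences
  have iXY : IndepFun X Y (ℙ : Measure Ω) := hIndep.indepFun (show (0:Fin 3) ≠ 1 by decide)
  have iXZ : IndepFun X Z (ℙ : Measure Ω) := hIndep.indepFun (show (0:Fin 3) ≠ 2 by decide)
  have iYZ : IndepFun Y Z (ℙ : Measure Ω) := hIndep.indepFun (show (1:Fin 3) ≠ 2 by decide)
  have iXY_Z : IndepFun (fun ω => X ω + Y ω) Z (ℙ : Measure Ω) :=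
    hIndep.indepFun_add_left hmeas 0 1 2 (by decide) (by decide)
  have iXZ_Y : IndepFun (fun ω => X ω + Z ω) Y (ℙ : Measure Ω) :=
    hIndep.indepFun_add_left hmeas 0 2 1 (by decide) (by decide)
  have iYZ_X : IndepFun (fun ω => Y ω + Z ω) X (ℙ : Measure Ω) :=
    hIndep.indepFun_add_left hmeas 1 2 0 (by decide) (by decide)
  have iX_YZpair : IndepFun X (fun ω => (Y ω, Z ω)) (ℙ : Measure Ω) :=
    (hIndep.indepFun_prodMk hmeas 1 2 0 (by decide) (by decide)).symm
  -- absolute continuity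
  have acXY : Measure.map (fun ω => X ω + Y ω) (ℙ : Measure Ω) ≪ volume :=
    map_add_ac hX hY iXY hXac
  have acXZ : Measure.map (fun ω => X ω + Z ω) (ℙ : Measure Ω) ≪ volume :=
    map_add_ac hX hZ iXZ hXac
  have acYZ : Measure.map (fun ω => Y ω + Z ω) (ℙ : Measure Ω) ≪ volume :=
    map_add_ac hY hZ iYZ hYac
  have acS : Measure.map (fun ω => X ω + (Y ω + Z ω)) (ℙ : Measure Ω) ≪ volume :=
    map_add_ac hX (hY.add hZ) iYZ_X.symm hXac
  -- density facts, phrased via rnDeriv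
  have hv1 : (Measure.map (fun ω => X ω + (Y ω + Z ω)) (ℙ : Measure Ω)).rnDeriv volume
      =ᵐ[volume] fun s => ∫⁻ t,
        (Measure.map (fun ω => X ω + Z ω) (ℙ : Measure Ω)).rnDeriv volume (s - t)
          ∂(Measure.map Y (ℙ : Measure Ω)) := by
    have h := rnDeriv_map_add (show Measurable fun ω => X ω + Z ω from hX.add hZ) hY iXZ_Y acXZ
    have heq : (fun ω => (X ω + Z ω) + Y ω) = (fun ω => X ω + (Y ω + Z ω)) := by
      funext ω; abel
    rwa [heq] at h
  have hv2 : (Measure.map (fun ω => X ω + (Y ω + Z ω)) (ℙ : Measure Ω)).rnDeriv volume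
      =ᵐ[volume] fun s => ∫⁻ t,
        (Measure.map (fun ω => Y ω + Z ω) (ℙ : Measure Ω)).rnDeriv volume (s - t)
          ∂(Measure.map X (ℙ : Measure Ω)) := by
    have h := rnDeriv_map_add (show Measurable fun ω => Y ω + Z ω from hY.add hZ) hX iYZ_X acYZ
    have heq : (fun ω => (Y ω + Z ω) + X ω) = (fun ω => X ω + (Y ω + Z ω)) := by
      funext ω; abel
    rwa [heq] at h
  haveI hPS : IsProbabilityMeasure
      (Measure.map (fun ω => X ω + (Y ω + Z ω)) (ℙ : Measure Ω)) :=
    Measure.isProbabilityMeasure_map (hX.add (hY.add hZ)).aemeasurable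
  haveI hPXY : IsProbabilityMeasure (Measure.map (fun ω => X ω + Y ω) (ℙ : Measure Ω)) :=
    Measure.isProbabilityMeasure_map (hX.add hY).aemeasurable
  haveI hPZ : IsProbabilityMeasure (Measure.map Z (ℙ : Measure Ω)) :=
    Measure.isProbabilityMeasure_map hZ.aemeasurable
  have hvle : ∫⁻ s, (Measure.map (fun ω => X ω + (Y ω + Z ω))
      (ℙ : Measure Ω)).rnDeriv volume s ∂volume ≤ 1 := by
    refine (Measure.lintegral_rnDeriv_le).trans ?_
    simp
  have hκle : Measure.map Z (ℙ : Measure Ω) ≤ volume := by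
    rw [hZunif]; exact Measure.restrict_le_self
  -- a.e. positivity and finiteness
  have hposXY := ae_pos_finite_rnDeriv (show Measurable fun ω => X ω + Y ω from hX.add hY) acXY
  have hposXZ := ae_pos_finite_rnDeriv (show Measurable fun ω => X ω + Z ω from hX.add hZ) acXZ
  have hposYZ := ae_pos_finite_rnDeriv (show Measurable fun ω => Y ω + Z ω from hY.add hZ) acYZ
  have hposS := ae_pos_finite_rnDeriv (show Measurable fun ω => X ω + (Y ω + Z ω) from hX.add (hY.add hZ)) acS
  -- log integrability and values
  obtain ⟨hUint, hUval⟩ := log_density_int (show Measurable fun ω => X ω + Y ω from hX.add hY) acXY hXY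
  obtain ⟨hFint, hFval⟩ := log_density_int (show Measurable fun ω => X ω + Z ω from hX.add hZ) acXZ hXZ
  obtain ⟨hGint, hGval⟩ := log_density_int (show Measurable fun ω => Y ω + Z ω from hY.add hZ) acYZ hYZ
  -- abbreviate densities
  set u := (Measure.map (fun ω => X ω + Y ω) (ℙ : Measure Ω)).rnDeriv volume with hu_def
  set fd := (Measure.map (fun ω => X ω + Z ω) (ℙ : Measure Ω)).rnDeriv volume with hfd_def
  set gd := (Measure.map (fun ω => Y ω + Z ω) (ℙ : Measure Ω)).rnDeriv volume with hgd_def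
  set vd := (Measure.map (fun ω => X ω + (Y ω + Z ω)) (ℙ : Measure Ω)).rnDeriv volume
    with hvd_def
  have humeas : Measurable u := hu_def ▸ Measure.measurable_rnDeriv _ _
  have hfmeas : Measurable fd := hfd_def ▸ Measure.measurable_rnDeriv _ _
  have hgmeas : Measurable gd := hgd_def ▸ Measure.measurable_rnDeriv _ _
  have hvmeas : Measurable vd := hvd_def ▸ Measure.measurable_rnDeriv _ _
  have hwdXY : volume.withDensity u = Measure.map (fun ω => X ω + Y ω) (ℙ : Measure Ω) := by
    rw [hu_def]; exact Measure.withDensity_rnDeriv_eq _ _ acXY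
  have hwdXZ : volume.withDensity fd = Measure.map (fun ω => X ω + Z ω) (ℙ : Measure Ω) := by
    rw [hfd_def]; exact Measure.withDensity_rnDeriv_eq _ _ acXZ
  have hwdYZ : volume.withDensity gd = Measure.map (fun ω => Y ω + Z ω) (ℙ : Measure Ω) := by
    rw [hgd_def]; exact Measure.withDensity_rnDeriv_eq _ _ acYZ
  -- the two ENNReal-valued correction terms
  have hHA : ∫⁻ ω, vd ((X ω + Y ω) + Z ω) * (u (X ω + Y ω))⁻¹ ∂(ℙ : Measure Ω) ≤ 1 := by
    have hpairXY_Z : Measure.map (fun ω => (X ω + Y ω, Z ω)) (ℙ : Measure Ω)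
        = (Measure.map (fun ω => X ω + Y ω) (ℙ : Measure Ω)).prod
            (Measure.map Z (ℙ : Measure Ω)) :=
      (indepFun_iff_map_prod_eq_prod_map_map (hX.add hY).aemeasurable
        hZ.aemeasurable).mp iXY_Z
    have hint : Measurable (fun p : EuclideanSpace ℝ (Fin n) × EuclideanSpace ℝ (Fin n) =>
        vd (p.1 + p.2) * (u p.1)⁻¹) :=
      (hvmeas.comp (measurable_fst.add measurable_snd)).mul
        ((humeas.comp measurable_fst).inv)
    calc ∫⁻ ω, vd ((X ω + Y ω) + Z ω) * (u (X ω + Y ω))⁻¹ ∂(ℙ : Measure Ω)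
        = ∫⁻ p : EuclideanSpace ℝ (Fin n) × EuclideanSpace ℝ (Fin n),
            vd (p.1 + p.2) * (u p.1)⁻¹
            ∂((Measure.map (fun ω => X ω + Y ω) (ℙ : Measure Ω)).prod
              (Measure.map Z (ℙ : Measure Ω))) := by
          rw [← hpairXY_Z, lintegral_map hint ((show Measurable fun ω => X ω + Y ω from hX.add hY).prodMk hZ)]
      _ = ∫⁻ w, ∫⁻ ζ, vd (w + ζ) * (u w)⁻¹ ∂(Measure.map Z (ℙ : Measure Ω))
            ∂(Measure.map (fun ω => X ω + Y ω) (ℙ : Measure Ω)) :=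
          lintegral_prod _ hint.aemeasurable
      _ = ∫⁻ w, (u w * ∫⁻ ζ, vd (w + ζ) * (u w)⁻¹ ∂(Measure.map Z (ℙ : Measure Ω)))
            ∂volume := by
          have hg : Measurable (fun w : EuclideanSpace ℝ (Fin n) =>
              ∫⁻ ζ, vd (w + ζ) * (u w)⁻¹ ∂(Measure.map Z (ℙ : Measure Ω))) :=
            Measurable.lintegral_prod_right'
              ((hvmeas.comp (measurable_fst.add measurable_snd)).mul
                ((humeas.comp measurable_fst).inv))
          rw [← hwdXY, lintegral_withDensity_eq_lintegral_mul _ humeas hg]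
          rfl
      _ = ∫⁻ w, u w * ((∫⁻ ζ, vd (w + ζ) ∂(Measure.map Z (ℙ : Measure Ω))) * (u w)⁻¹)
            ∂volume := by
          refine lintegral_congr fun w => ?_
          have hmv : AEMeasurable (fun ζ : EuclideanSpace ℝ (Fin n) => vd (w + ζ))
              (Measure.map Z (ℙ : Measure Ω)) :=
            (hvmeas.comp (measurable_const.add measurable_id)).aemeasurable
          rw [lintegral_mul_const'' _ hmv]
      _ ≤ ∫⁻ w, ∫⁻ ζ, vd (w + ζ) ∂(Measure.map Z (ℙ : Measure Ω)) ∂volume := by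
          refine lintegral_mono fun w => ?_
          calc u w * ((∫⁻ ζ, vd (w + ζ) ∂(Measure.map Z (ℙ : Measure Ω))) * (u w)⁻¹)
              = (u w * (u w)⁻¹) * ∫⁻ ζ, vd (w + ζ) ∂(Measure.map Z (ℙ : Measure Ω)) := by
                ring
            _ ≤ 1 * ∫⁻ ζ, vd (w + ζ) ∂(Measure.map Z (ℙ : Measure Ω)) :=
                mul_le_mul_left (ENNReal.mul_inv_le_one _) _
            _ = ∫⁻ ζ, vd (w + ζ) ∂(Measure.map Z (ℙ : Measure Ω)) := one_mul _
      _ = ∫⁻ ζ, ∫⁻ w, vd (w + ζ) ∂volume ∂(Measure.map Z (ℙ : Measure Ω)) :=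
          lintegral_lintegral_swap
            ((hvmeas.comp (measurable_fst.add measurable_snd)).aemeasurable)
      _ = ∫⁻ _, ∫⁻ s, vd s ∂volume ∂(Measure.map Z (ℙ : Measure Ω)) :=
          lintegral_congr fun ζ => lintegral_add_right_eq_self vd ζ
      _ ≤ ∫⁻ _, 1 ∂(Measure.map Z (ℙ : Measure Ω)) := lintegral_mono fun _ => hvle
      _ = 1 := by simp
  have hHB : ∫⁻ ω, fd (X ω + Z ω) * gd (Y ω + Z ω) * (vd (X ω + (Y ω + Z ω)))⁻¹
      ∂(ℙ : Measure Ω) ≤ 1 := by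
    have hYZpair : Measure.map (fun ω => (Y ω, Z ω)) (ℙ : Measure Ω)
        = (Measure.map Y (ℙ : Measure Ω)).prod (Measure.map Z (ℙ : Measure Ω)) :=
      (indepFun_iff_map_prod_eq_prod_map_map hY.aemeasurable hZ.aemeasurable).mp iYZ
    have htriple : Measure.map (fun ω => (X ω, (Y ω, Z ω))) (ℙ : Measure Ω)
        = (Measure.map X (ℙ : Measure Ω)).prod
            ((Measure.map Y (ℙ : Measure Ω)).prod (Measure.map Z (ℙ : Measure Ω))) := by
      rw [(indepFun_iff_map_prod_eq_prod_map_map hX.aemeasurable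
        (hY.prodMk hZ).aemeasurable).mp iX_YZpair, hYZpair]
    have hPhi : Measurable (fun p : EuclideanSpace ℝ (Fin n) ×
        (EuclideanSpace ℝ (Fin n) × EuclideanSpace ℝ (Fin n)) =>
        fd (p.1 + p.2.2) * gd (p.2.1 + p.2.2) * (vd (p.1 + (p.2.1 + p.2.2)))⁻¹) := by
      refine Measurable.mul (Measurable.mul ?_ ?_) ?_
      · exact hfmeas.comp (measurable_fst.add (measurable_snd.comp measurable_snd))
      · exact hgmeas.comp
          ((measurable_fst.comp measurable_snd).add (measurable_snd.comp measurable_snd))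
      · exact (hvmeas.comp (measurable_fst.add
          ((measurable_fst.comp measurable_snd).add
            (measurable_snd.comp measurable_snd)))).inv
    calc ∫⁻ ω, fd (X ω + Z ω) * gd (Y ω + Z ω) * (vd (X ω + (Y ω + Z ω)))⁻¹
          ∂(ℙ : Measure Ω)
        = ∫⁻ p : EuclideanSpace ℝ (Fin n) ×
            (EuclideanSpace ℝ (Fin n) × EuclideanSpace ℝ (Fin n)),
            fd (p.1 + p.2.2) * gd (p.2.1 + p.2.2) * (vd (p.1 + (p.2.1 + p.2.2)))⁻¹
            ∂((Measure.map X (ℙ : Measure Ω)).prod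
              ((Measure.map Y (ℙ : Measure Ω)).prod (Measure.map Z (ℙ : Measure Ω)))) := by
          rw [← htriple, lintegral_map hPhi (hX.prodMk (hY.prodMk hZ))]
      _ = ∫⁻ x, ∫⁻ q, fd (x + q.2) * gd (q.1 + q.2) * (vd (x + (q.1 + q.2)))⁻¹
            ∂((Measure.map Y (ℙ : Measure Ω)).prod (Measure.map Z (ℙ : Measure Ω)))
            ∂(Measure.map X (ℙ : Measure Ω)) :=
          lintegral_prod _ hPhi.aemeasurable
      _ = ∫⁻ x, ∫⁻ y, ∫⁻ ζ, fd (x + ζ) * gd (y + ζ) * (vd (x + (y + ζ)))⁻¹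
            ∂(Measure.map Z (ℙ : Measure Ω)) ∂(Measure.map Y (ℙ : Measure Ω))
            ∂(Measure.map X (ℙ : Measure Ω)) := by
          refine lintegral_congr fun x => ?_
          exact lintegral_prod _ ((hPhi.comp measurable_prodMk_left).aemeasurable)
      _ ≤ ∫⁻ x, ∫⁻ y, ∫⁻ ζ, fd (x + ζ) * gd (y + ζ) * (vd (x + (y + ζ)))⁻¹
            ∂volume ∂(Measure.map Y (ℙ : Measure Ω)) ∂(Measure.map X (ℙ : Measure Ω)) :=
          lintegral_mono fun x => lintegral_mono fun y => lintegral_mono' hκle le_rfl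
      _ = ∫⁻ x, ∫⁻ y, ∫⁻ w, fd (w - y) * gd (w - x) * (vd w)⁻¹ ∂volume
            ∂(Measure.map Y (ℙ : Measure Ω)) ∂(Measure.map X (ℙ : Measure Ω)) := by
          refine lintegral_congr fun x => lintegral_congr fun y => ?_
          have hsub := lintegral_sub_right_eq_self (μ := (volume : Measure (EuclideanSpace ℝ (Fin n))))
            (fun ζ => fd (x + ζ) * gd (y + ζ) * (vd (x + (y + ζ)))⁻¹) (x + y)
          rw [← hsub]
          refine lintegral_congr fun w => ?_
          have e1 : x + (w - (x + y)) = w - y := by abel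
          have e2 : y + (w - (x + y)) = w - x := by abel
          have e3 : x + (y + (w - (x + y))) = w := by abel
          rw [e3, e1, e2]
      _ = ∫⁻ x, ∫⁻ w, (gd (w - x) * (vd w)⁻¹)
            * ∫⁻ y, fd (w - y) ∂(Measure.map Y (ℙ : Measure Ω)) ∂volume
            ∂(Measure.map X (ℙ : Measure Ω)) := by
          refine lintegral_congr fun x => ?_
          have hswap : AEMeasurable (fun z : EuclideanSpace ℝ (Fin n) × EuclideanSpace ℝ (Fin n) =>
              fd (z.2 - z.1) * gd (z.2 - x) * (vd z.2)⁻¹)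
              ((Measure.map Y (ℙ : Measure Ω)).prod (volume : Measure (EuclideanSpace ℝ (Fin n)))) :=
            (((hfmeas.comp (measurable_snd.sub measurable_fst)).mul
              (hgmeas.comp (measurable_snd.sub measurable_const))).mul
                ((hvmeas.comp measurable_snd).inv)).aemeasurable
          rw [lintegral_lintegral_swap hswap]
          refine lintegral_congr fun w => ?_
          have hmf : Measurable (fun y : EuclideanSpace ℝ (Fin n) => fd (w - y)) :=
            hfmeas.comp (measurable_const.sub measurable_id)
          rw [← lintegral_const_mul _ hmf]
          refine lintegral_congr fun y => ?_
          ring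
      _ = ∫⁻ w, (∫⁻ x, gd (w - x) ∂(Measure.map X (ℙ : Measure Ω)))
            * ((vd w)⁻¹ * ∫⁻ y, fd (w - y) ∂(Measure.map Y (ℙ : Measure Ω))) ∂volume := by
          have hc1 : Measurable (fun w : EuclideanSpace ℝ (Fin n) =>
              ∫⁻ y, fd (w - y) ∂(Measure.map Y (ℙ : Measure Ω))) :=
            Measurable.lintegral_prod_right'
              (hfmeas.comp (measurable_fst.sub measurable_snd))
          have hswap : AEMeasurable (fun z : EuclideanSpace ℝ (Fin n) × EuclideanSpace ℝ (Fin n) =>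
              (gd (z.2 - z.1) * (vd z.2)⁻¹)
                * ∫⁻ y, fd (z.2 - y) ∂(Measure.map Y (ℙ : Measure Ω)))
              ((Measure.map X (ℙ : Measure Ω)).prod (volume : Measure (EuclideanSpace ℝ (Fin n)))) :=
            (((hgmeas.comp (measurable_snd.sub measurable_fst)).mul
              ((hvmeas.comp measurable_snd).inv)).mul
              (hc1.comp measurable_snd)).aemeasurable
          rw [lintegral_lintegral_swap hswap]
          refine lintegral_congr fun w => ?_
          have hmg : AEMeasurable (fun x : EuclideanSpace ℝ (Fin n) => gd (w - x))
              (Measure.map X (ℙ : Measure Ω)) :=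
            (hgmeas.comp (measurable_const.sub measurable_id)).aemeasurable
          rw [← lintegral_mul_const'' _ hmg]
          refine lintegral_congr fun x => ?_
          ring
      _ = ∫⁻ w, vd w * ((vd w)⁻¹ * vd w) ∂volume := by
          refine lintegral_congr_ae ?_
          filter_upwards [hv1, hv2] with w e1 e2
          have e1' : vd w = ∫⁻ t, fd (w - t) ∂(Measure.map Y (ℙ : Measure Ω)) := e1
          have e2' : vd w = ∫⁻ t, gd (w - t) ∂(Measure.map X (ℙ : Measure Ω)) := e2
          rw [← e1', ← e2']
      _ ≤ ∫⁻ w, vd w ∂volume := by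
          refine lintegral_mono fun w => ?_
          calc vd w * ((vd w)⁻¹ * vd w) = (vd w * (vd w)⁻¹) * vd w := by ring
            _ ≤ 1 * vd w := mul_le_mul_left (ENNReal.mul_inv_le_one _) _
            _ = vd w := one_mul _
      _ ≤ 1 := hvle
  -- pass to real-valued integrals
  have hHAmeas : AEMeasurable
      (fun ω => vd ((X ω + Y ω) + Z ω) * (u (X ω + Y ω))⁻¹) (ℙ : Measure Ω) :=
    ((hvmeas.comp ((hX.add hY).add hZ)).mul
      ((humeas.comp (hX.add hY)).inv)).aemeasurable
  have hHBmeas : AEMeasurable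
      (fun ω => fd (X ω + Z ω) * gd (Y ω + Z ω) * (vd (X ω + (Y ω + Z ω)))⁻¹)
      (ℙ : Measure Ω) :=
    (((hfmeas.comp (hX.add hZ)).mul (hgmeas.comp (hY.add hZ))).mul
      ((hvmeas.comp (hX.add (hY.add hZ))).inv)).aemeasurable
  have hHAne : ∫⁻ ω, vd ((X ω + Y ω) + Z ω) * (u (X ω + Y ω))⁻¹ ∂(ℙ : Measure Ω) ≠ ∞ :=
    (lt_of_le_of_lt hHA ENNReal.one_lt_top).ne
  have hHBne : ∫⁻ ω, fd (X ω + Z ω) * gd (Y ω + Z ω) * (vd (X ω + (Y ω + Z ω)))⁻¹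
      ∂(ℙ : Measure Ω) ≠ ∞ :=
    (lt_of_le_of_lt hHB ENNReal.one_lt_top).ne
  have hHAint : Integrable
      (fun ω => (vd ((X ω + Y ω) + Z ω) * (u (X ω + Y ω))⁻¹).toReal) (ℙ : Measure Ω) :=
    integrable_toReal_of_lintegral_ne_top hHAmeas hHAne
  have hHBint : Integrable
      (fun ω => (fd (X ω + Z ω) * gd (Y ω + Z ω) * (vd (X ω + (Y ω + Z ω)))⁻¹).toReal)
      (ℙ : Measure Ω) :=
    integrable_toReal_of_lintegral_ne_top hHBmeas hHBne
  have hHAval : ∫ ω, (vd ((X ω + Y ω) + Z ω) * (u (X ω + Y ω))⁻¹).toReal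
      ∂(ℙ : Measure Ω) ≤ 1 := by
    rw [integral_toReal hHAmeas (ae_lt_top' hHAmeas hHAne)]
    have := ENNReal.toReal_mono ENNReal.one_ne_top hHA
    simpa using this
  have hHBval : ∫ ω, (fd (X ω + Z ω) * gd (Y ω + Z ω) * (vd (X ω + (Y ω + Z ω)))⁻¹).toReal
      ∂(ℙ : Measure Ω) ≤ 1 := by
    rw [integral_toReal hHBmeas (ae_lt_top' hHBmeas hHBne)]
    have := ENNReal.toReal_mono ENNReal.one_ne_top hHB
    simpa using this
  -- pointwise master inequality
  have hmaster : ∀ᵐ ω ∂(ℙ : Measure Ω),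
      Real.log ((fd (X ω + Z ω)).toReal) + Real.log ((gd (Y ω + Z ω)).toReal)
        - Real.log ((u (X ω + Y ω)).toReal)
      ≤ ((vd ((X ω + Y ω) + Z ω) * (u (X ω + Y ω))⁻¹).toReal - 1)
        + ((fd (X ω + Z ω) * gd (Y ω + Z ω) * (vd (X ω + (Y ω + Z ω)))⁻¹).toReal - 1) := by
    filter_upwards [hposXY, hposXZ, hposYZ, hposS] with ω h1 h2 h3 h4
    have hassoc : (X ω + Y ω) + Z ω = X ω + (Y ω + Z ω) := add_assoc _ _ _
    rw [hassoc]
    have hU : 0 < (u (X ω + Y ω)).toReal := ENNReal.toReal_pos h1.1 h1.2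
    have hF : 0 < (fd (X ω + Z ω)).toReal := ENNReal.toReal_pos h2.1 h2.2
    have hG : 0 < (gd (Y ω + Z ω)).toReal := ENNReal.toReal_pos h3.1 h3.2
    have hV : 0 < (vd (X ω + (Y ω + Z ω))).toReal := ENNReal.toReal_pos h4.1 h4.2
    have eA : (vd (X ω + (Y ω + Z ω)) * (u (X ω + Y ω))⁻¹).toReal
        = (vd (X ω + (Y ω + Z ω))).toReal / (u (X ω + Y ω)).toReal := by
      rw [ENNReal.toReal_mul, ENNReal.toReal_inv, div_eq_mul_inv]
    have eB : (fd (X ω + Z ω) * gd (Y ω + Z ω) * (vd (X ω + (Y ω + Z ω)))⁻¹).toReal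
        = (fd (X ω + Z ω)).toReal * (gd (Y ω + Z ω)).toReal
            / (vd (X ω + (Y ω + Z ω))).toReal := by
      rw [ENNReal.toReal_mul, ENNReal.toReal_mul, ENNReal.toReal_inv, div_eq_mul_inv]
    have lA : Real.log ((vd (X ω + (Y ω + Z ω))).toReal / (u (X ω + Y ω)).toReal)
        ≤ (vd (X ω + (Y ω + Z ω))).toReal / (u (X ω + Y ω)).toReal - 1 :=
      Real.log_le_sub_one_of_pos (div_pos hV hU)
    rw [Real.log_div hV.ne' hU.ne'] at lA
    have lB : Real.log ((fd (X ω + Z ω)).toReal * (gd (Y ω + Z ω)).toReal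
          / (vd (X ω + (Y ω + Z ω))).toReal)
        ≤ (fd (X ω + Z ω)).toReal * (gd (Y ω + Z ω)).toReal
            / (vd (X ω + (Y ω + Z ω))).toReal - 1 :=
      Real.log_le_sub_one_of_pos (div_pos (mul_pos hF hG) hV)
    rw [Real.log_div (mul_pos hF hG).ne' hV.ne', Real.log_mul hF.ne' hG.ne'] at lB
    rw [eA, eB]
    linarith
  -- integrate the master inequality
  have hLHSint : Integrable (fun ω =>
      Real.log ((fd (X ω + Z ω)).toReal) + Real.log ((gd (Y ω + Z ω)).toReal)
        - Real.log ((u (X ω + Y ω)).toReal)) (ℙ : Measure Ω) :=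
    (hFint.add hGint).sub hUint
  have hRHSint : Integrable (fun ω =>
      ((vd ((X ω + Y ω) + Z ω) * (u (X ω + Y ω))⁻¹).toReal - 1)
        + ((fd (X ω + Z ω) * gd (Y ω + Z ω) * (vd (X ω + (Y ω + Z ω)))⁻¹).toReal - 1))
      (ℙ : Measure Ω) :=
    (hHAint.sub (integrable_const 1)).add (hHBint.sub (integrable_const 1))
  have hFGint : Integrable (fun ω =>
      Real.log ((fd (X ω + Z ω)).toReal) + Real.log ((gd (Y ω + Z ω)).toReal))
      (ℙ : Measure Ω) := hFint.add hGint
  have hA1int : Integrable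
      (fun ω => (vd ((X ω + Y ω) + Z ω) * (u (X ω + Y ω))⁻¹).toReal - 1)
      (ℙ : Measure Ω) := hHAint.sub (integrable_const 1)
  have hB1int : Integrable
      (fun ω => (fd (X ω + Z ω) * gd (Y ω + Z ω) * (vd (X ω + (Y ω + Z ω)))⁻¹).toReal - 1)
      (ℙ : Measure Ω) := hHBint.sub (integrable_const 1)
  have hmono := integral_mono_ae hLHSint hRHSint hmaster
  rw [integral_sub hFGint hUint, integral_add hFint hGint,
    integral_add hA1int hB1int,
    integral_sub hHAint (integrable_const 1), integral_sub hHBint (integrable_const 1),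
    integral_const] at hmono
  simp only [measure_univ, probReal_univ, ENNReal.toReal_one, smul_eq_mul, one_mul] at hmono
  rw [hUval, hFval, hGval] at hmono
  have hkey : ∫ x, entIntegrand (Measure.map (fun ω => X ω + Z ω) (ℙ : Measure Ω)) x ∂volume
      + ∫ x, entIntegrand (Measure.map (fun ω => Y ω + Z ω) (ℙ : Measure Ω)) x ∂volume
      ≤ ∫ x, entIntegrand (Measure.map (fun ω => X ω + Y ω) (ℙ : Measure Ω)) x ∂volume := by
    linarith [hHAval, hHBval]
  simp only [entIntegrand] at hkey
  simp only [dEnt]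
  linarith
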